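/- Let n ≥ 1 and let L be a positive integer with 2n | L, and set M = L/n (so M is even). Then the rearranged matrix G' defined by G'_{(j−1)M+a, (j'−1)M+b} := G^{(z^n+1)}(L)_{j+(a−1)n, j'+(b−1)n} for j,j' ∈ {1,…,n} and a,b ∈ {1,…,M} is block diagonal: G'_{(j−1)M+a,(j'−1)M+b} = 0 whenever j ≠ j', and for each j the M×M diagonal block with entries G'_{(j−1)M+a,(j−1)M+b} equals G^{(z+1)}(M) if n is odd, and equals D_M G^{(z+1)}(M) D_M if n is even, where D_M is the M×M diagonal matrix with diagonal entries (D_M)_{aa} = (−1)^{a+1}. -/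

import Mathlib

open scoped BigOperators Matrix

/-- `θ_k = (2π/L)(k - 1/2)` for `k = 1, …, L` (here `k : Fin L` is the 0-based index,
so `θ_k = (2π/L)(k + 1/2)`). -/
noncomputable def theta (L : ℕ) (k : Fin L) : ℝ :=
  2 * Real.pi / L * ((k : ℝ) + 1 / 2)

/-- The half-shifted correlation matrix
`G^{(f)}(L)_{nm} = ((-1)^{n-m}/L) Σ_{k=1}^{L} (f(e^{iθ_k})/|f(e^{iθ_k})|) e^{iθ_k (n-m)}`. -/
noncomputable def Gf (L : ℕ) (f : ℂ → ℂ) : Matrix (Fin L) (Fin L) ℂ :=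
  Matrix.of fun n m : Fin L =>
    (-1 : ℂ) ^ ((n : ℤ) - (m : ℤ)) / (L : ℂ) *
      ∑ k : Fin L,
        f (Complex.exp (Complex.I * (theta L k : ℂ))) /
            ((‖f (Complex.exp (Complex.I * (theta L k : ℂ)))‖) : ℂ) *
          Complex.exp (Complex.I * (theta L k : ℂ) * (((n : ℤ) - (m : ℤ) : ℤ) : ℂ))

/-- The site `j + (a-1)·n` (0-based: `j + a·n`) in a chain of length `L = n·M`,
grouping indices by residue classes modulo `n`. -/
def site (n M L : ℕ) (h : n * M = L) (j : Fin n) (a : Fin M) : Fin L :=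
  ⟨(j : ℕ) + (a : ℕ) * n, by
    have h1 : (j : ℕ) + (a : ℕ) * n < ((a : ℕ) + 1) * n := by
      have := j.isLt; nlinarith
    have h2 : ((a : ℕ) + 1) * n ≤ M * n := Nat.mul_le_mul_right n a.isLt
    have h3 : M * n = L := by rw [Nat.mul_comm]; exact h
    exact lt_of_lt_of_le h1 (le_of_le_of_eq h2 h3)⟩

open Complex

private lemma sum_reindex (n M : ℕ) (F : Fin (n*M) → ℂ) :
    ∑ k : Fin (n*M), F k = ∑ t : Fin n, ∑ c : Fin M, F (finProdFinEquiv (t, c)) := by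
  rw [← (Equiv.sum_comp finProdFinEquiv F), Fintype.sum_prod_type]

private lemma key_theta (n M : ℕ) (hn : 0 < n) (hM : 0 < M) (t : Fin n) (c : Fin M) :
    theta (n*M) (finProdFinEquiv (t, c))
      = 2*Real.pi/(n*M) * ((c:ℝ)+1/2) + 2*Real.pi*t/n := by
  have hval : ((finProdFinEquiv (t, c) : Fin (n*M)) : ℕ) = (c:ℕ) + M * (t:ℕ) := rfl
  unfold theta
  rw [hval]
  have hn' : (n:ℝ) ≠ 0 := Nat.cast_ne_zero.mpr hn.ne'
  have hM' : (M:ℝ) ≠ 0 := Nat.cast_ne_zero.mpr hM.ne'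
  push_cast
  field_simp
  ring

private lemma h2_lemma (n M : ℕ) (hn : 0 < n) (hM : 0 < M) (t : Fin n) (c : Fin M) :
    Complex.I * (theta (n*M) (finProdFinEquiv (t, c)) : ℂ) * (n : ℂ)
      = Complex.I * (theta M c : ℂ) + ((t:ℕ) : ℂ) * (2 * Real.pi * Complex.I) := by
  have h1 : (n:ℝ) * theta (n*M) (finProdFinEquiv (t, c)) = theta M c + 2*Real.pi*(t:ℕ) := by
    rw [key_theta n M hn hM t c]
    unfold theta
    have hn' : (n:ℝ) ≠ 0 := Nat.cast_ne_zero.mpr hn.ne'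
    have hM' : (M:ℝ) ≠ 0 := Nat.cast_ne_zero.mpr hM.ne'
    push_cast
    field_simp
  have h1' := congrArg (fun x : ℝ => (x : ℂ)) h1
  push_cast at h1'
  linear_combination Complex.I * h1'

private lemma pow_exp_lemma (n M : ℕ) (hn : 0 < n) (hM : 0 < M) (t : Fin n) (c : Fin M) :
    Complex.exp (Complex.I * (theta (n*M) (finProdFinEquiv (t, c)) : ℂ)) ^ n
      = Complex.exp (Complex.I * (theta M c : ℂ)) := by
  rw [← Complex.exp_nat_mul, mul_comm (n:ℂ), h2_lemma n M hn hM t c, Complex.exp_add,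
    Complex.exp_nat_mul_two_pi_mul_I, mul_one]

private lemma exp_arg_lemma (n M : ℕ) (hn : 0 < n) (hM : 0 < M) (t : Fin n) (c : Fin M)
    (e : ℤ) :
    Complex.exp (Complex.I * (theta (n*M) (finProdFinEquiv (t, c)) : ℂ) * ((e * n : ℤ) : ℂ))
      = Complex.exp (Complex.I * (theta M c : ℂ) * (e : ℂ)) := by
  have h3 : Complex.I * (theta (n*M) (finProdFinEquiv (t, c)) : ℂ) * ((e * n : ℤ) : ℂ)
      = Complex.I * (theta M c : ℂ) * (e : ℂ)
        + ((((t:ℕ):ℤ) * e : ℤ) : ℂ) * (2 * Real.pi * Complex.I) := by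
    have := h2_lemma n M hn hM t c
    push_cast
    push_cast at this
    linear_combination (e:ℂ) * this
  rw [h3, Complex.exp_add, Complex.exp_int_mul_two_pi_mul_I, mul_one]

private lemma exp_split_lemma (n M : ℕ) (hn : 0 < n) (hM : 0 < M) (t : Fin n) (c : Fin M)
    (d : ℤ) :
    Complex.exp (Complex.I * (theta (n*M) (finProdFinEquiv (t, c)) : ℂ) * (d : ℂ))
      = Complex.exp (((t:ℕ) : ℂ) * (2 * Real.pi * Complex.I * (d:ℂ) / (n:ℂ)))
        * Complex.exp (Complex.I * ((2*Real.pi/(n*M) * ((c:ℝ)+1/2) : ℝ) : ℂ) * (d : ℂ)) := by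
  rw [← Complex.exp_add]
  congr 1
  have h1 : (theta (n*M) (finProdFinEquiv (t, c)) : ℝ)
      = 2*Real.pi/(n*M) * ((c:ℝ)+1/2) + 2*Real.pi*(t:ℕ)/n := key_theta n M hn hM t c
  have h1' := congrArg (fun x : ℝ => (x : ℂ)) h1
  have hn' : (n:ℂ) ≠ 0 := Nat.cast_ne_zero.mpr hn.ne'
  push_cast at h1' ⊢
  linear_combination Complex.I * (d:ℂ) * h1'

private lemma geom_zero (n : ℕ) (hn : 0 < n) (d : ℤ) (hnd : ¬ ((n:ℤ) ∣ d)) :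
    ∑ t : Fin n, Complex.exp (((t:ℕ) : ℂ) * (2 * Real.pi * Complex.I * (d:ℂ) / (n:ℂ))) = 0 := by
  have hn' : (n:ℂ) ≠ 0 := Nat.cast_ne_zero.mpr hn.ne'
  set ζ := Complex.exp (2 * Real.pi * Complex.I * (d:ℂ) / (n:ℂ)) with hζ
  have hre : ∀ t : Fin n, Complex.exp (((t:ℕ) : ℂ) * (2 * Real.pi * Complex.I * (d:ℂ) / (n:ℂ)))
      = ζ ^ (t:ℕ) := fun t => Complex.exp_nat_mul _ _
  rw [Finset.sum_congr rfl fun t _ => hre t]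
  rw [Fin.sum_univ_eq_sum_range (fun i => ζ ^ i) n]
  have hζn : ζ ^ n = 1 := by
    rw [← Complex.exp_nat_mul]
    have : (n:ℂ) * (2 * Real.pi * Complex.I * (d:ℂ) / (n:ℂ)) = (d:ℂ) * (2 * Real.pi * Complex.I) := by
      field_simp
    rw [this]
    exact_mod_cast Complex.exp_int_mul_two_pi_mul_I d
  have hζ1 : ζ ≠ 1 := by
    intro h
    rw [hζ, Complex.exp_eq_one_iff] at h
    obtain ⟨m, hm⟩ := h
    have hπ : (2 * (Real.pi:ℂ) * Complex.I) ≠ 0 := by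
      simp [Real.pi_ne_zero, Complex.I_ne_zero]
    have hd : (d:ℂ) = (m:ℂ) * (n:ℂ) := by
      field_simp at hm
      have := hm
      -- hm : 2 * π * I * d = m * (2 * π * I) * n  (some arrangement)
      apply mul_left_cancel₀ hπ
      linear_combination (2 * (Real.pi:ℂ) * Complex.I) * this
    have hd' : d = m * n := by exact_mod_cast hd
    exact hnd ⟨m, by linarith [hd']⟩
  rw [geom_sum_eq hζ1, hζn]
  simp

private lemma SUM1 (n M : ℕ) (hn : 0 < n) (hM : 0 < M) (e : ℤ) :
    (∑ k : Fin (n*M),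
      (Complex.exp (Complex.I * (theta (n*M) k : ℂ)) ^ n + 1) /
          ((‖Complex.exp (Complex.I * (theta (n*M) k : ℂ)) ^ n + 1‖) : ℂ) *
        Complex.exp (Complex.I * (theta (n*M) k : ℂ) * ((e * n : ℤ) : ℂ)))
      = (n:ℂ) * ∑ c : Fin M,
          (Complex.exp (Complex.I * (theta M c : ℂ)) + 1) /
              ((‖Complex.exp (Complex.I * (theta M c : ℂ)) + 1‖) : ℂ) *
            Complex.exp (Complex.I * (theta M c : ℂ) * ((e : ℤ) : ℂ)) := by
  rw [sum_reindex]
  have hterm : ∀ (t : Fin n) (c : Fin M),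
      (Complex.exp (Complex.I * (theta (n*M) (finProdFinEquiv (t,c)) : ℂ)) ^ n + 1) /
          ((‖Complex.exp (Complex.I * (theta (n*M) (finProdFinEquiv (t,c)) : ℂ)) ^ n + 1‖) : ℂ) *
        Complex.exp (Complex.I * (theta (n*M) (finProdFinEquiv (t,c)) : ℂ) * ((e * n : ℤ) : ℂ))
      = (Complex.exp (Complex.I * (theta M c : ℂ)) + 1) /
            ((‖Complex.exp (Complex.I * (theta M c : ℂ)) + 1‖) : ℂ) *
          Complex.exp (Complex.I * (theta M c : ℂ) * ((e : ℤ) : ℂ)) := by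
    intro t c
    rw [pow_exp_lemma n M hn hM t c, exp_arg_lemma n M hn hM t c e]
  calc (∑ t : Fin n, ∑ c : Fin M, _) = ∑ t : Fin n, ∑ c : Fin M,
        (Complex.exp (Complex.I * (theta M c : ℂ)) + 1) /
            ((‖Complex.exp (Complex.I * (theta M c : ℂ)) + 1‖) : ℂ) *
          Complex.exp (Complex.I * (theta M c : ℂ) * ((e : ℤ) : ℂ)) :=
      Finset.sum_congr rfl fun t _ => Finset.sum_congr rfl fun c _ => hterm t c
    _ = (n:ℂ) * _ := by
      rw [Finset.sum_const, Finset.card_univ, Fintype.card_fin, nsmul_eq_mul]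

private lemma SUM0 (n M : ℕ) (hn : 0 < n) (hM : 0 < M) (d : ℤ) (hnd : ¬ ((n:ℤ) ∣ d)) :
    (∑ k : Fin (n*M),
      (Complex.exp (Complex.I * (theta (n*M) k : ℂ)) ^ n + 1) /
          ((‖Complex.exp (Complex.I * (theta (n*M) k : ℂ)) ^ n + 1‖) : ℂ) *
        Complex.exp (Complex.I * (theta (n*M) k : ℂ) * ((d : ℤ) : ℂ))) = 0 := by
  rw [sum_reindex]
  have hterm : ∀ (t : Fin n) (c : Fin M),
      (Complex.exp (Complex.I * (theta (n*M) (finProdFinEquiv (t,c)) : ℂ)) ^ n + 1) /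
          ((‖Complex.exp (Complex.I * (theta (n*M) (finProdFinEquiv (t,c)) : ℂ)) ^ n + 1‖) : ℂ) *
        Complex.exp (Complex.I * (theta (n*M) (finProdFinEquiv (t,c)) : ℂ) * ((d : ℤ) : ℂ))
      = Complex.exp (((t:ℕ) : ℂ) * (2 * Real.pi * Complex.I * (d:ℂ) / (n:ℂ)))
        * ((Complex.exp (Complex.I * (theta M c : ℂ)) + 1) /
              ((‖Complex.exp (Complex.I * (theta M c : ℂ)) + 1‖) : ℂ) *
            Complex.exp (Complex.I * ((2*Real.pi/(n*M) * ((c:ℝ)+1/2) : ℝ) : ℂ) * ((d:ℤ) : ℂ))) := by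
    intro t c
    rw [pow_exp_lemma n M hn hM t c, exp_split_lemma n M hn hM t c d]
    push_cast
    ring
  calc (∑ t : Fin n, ∑ c : Fin M, _)
      = ∑ t : Fin n, Complex.exp (((t:ℕ) : ℂ) * (2 * Real.pi * Complex.I * (d:ℂ) / (n:ℂ)))
        * ∑ c : Fin M, ((Complex.exp (Complex.I * (theta M c : ℂ)) + 1) /
              ((‖Complex.exp (Complex.I * (theta M c : ℂ)) + 1‖) : ℂ) *
            Complex.exp (Complex.I * ((2*Real.pi/(n*M) * ((c:ℝ)+1/2) : ℝ) : ℂ) * ((d:ℤ) : ℂ))) := by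
        refine Finset.sum_congr rfl fun t _ => ?_
        rw [Finset.mul_sum]
        exact Finset.sum_congr rfl fun c _ => hterm t c
    _ = 0 := by
        rw [← Finset.sum_mul, geom_zero n hn d hnd, zero_mul]

private lemma sign_odd (n : ℕ) (hodd : Odd n) (e : ℤ) : (-1:ℂ)^(e * (n:ℤ)) = (-1:ℂ)^e := by
  rw [zpow_mul]
  rcases Int.even_or_odd e with he|he
  · rw [he.neg_one_zpow, one_zpow]
  · rw [he.neg_one_zpow]
    exact Odd.neg_one_zpow (by exact_mod_cast hodd)

private lemma sign_even (n : ℕ) (heven : Even n) (e : ℤ) : (-1:ℂ)^(e * (n:ℤ)) = 1 := by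
  have h : Even (e * (n:ℤ)) := (Int.even_coe_nat n |>.mpr heven).mul_left e
  exact h.neg_one_zpow

private lemma sign_cancel (a b : ℕ) :
    ((-1:ℂ)^(a+b)) * (-1:ℂ)^((a:ℤ)-(b:ℤ)) = 1 := by
  have hiff : Even ((a:ℤ)-(b:ℤ)) ↔ Even (a+b) := by
    rw [Int.even_sub, Nat.even_add]
    simp [Int.even_coe_nat]
  by_cases h : Even ((a:ℤ)-(b:ℤ))
  · rw [h.neg_one_zpow, (hiff.mp h).neg_one_pow]; norm_num
  · rw [(Int.not_even_iff_odd.mp h).neg_one_zpow,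
        (Nat.not_even_iff_odd.mp (fun he => h (hiff.mpr he))).neg_one_pow]
    norm_num

/-- **Mode-pair reduction for `f(z) = zⁿ + 1`.**  Let `n ≥ 1`, `2n ∣ L`,
`M = L/n`.  Rearranging `G^{(zⁿ+1)}(L)` by residue classes mod `n`
(`G'_{(j-1)M+a,(j'-1)M+b} = G_{j+(a-1)n, j'+(b-1)n}`), the result is block
diagonal with `n` identical `M×M` blocks, each equal to `G^{(z+1)}(M)` for odd
`n` and to `D_M G^{(z+1)}(M) D_M` for even `n`, where `D_M = diag(1,-1,1,…)`. -/
theorem block_reduction_zn_plus_one (n L M : ℕ) (hn : 1 ≤ n) (hL : 0 < L)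
    (hdvd : 2 * n ∣ L) (hM : M = L / n) (hprod : n * M = L) :
    (∀ (j j' : Fin n) (a b : Fin M), j ≠ j' →
      Gf L (fun z => z ^ n + 1) (site n M L hprod j a) (site n M L hprod j' b) = 0) ∧
    (∀ (j : Fin n) (a b : Fin M),
      Gf L (fun z => z ^ n + 1) (site n M L hprod j a) (site n M L hprod j b) =
        if Odd n then Gf M (fun z => z + 1) a b
        else (-1 : ℂ) ^ ((a : ℕ) + (b : ℕ)) * Gf M (fun z => z + 1) a b) := by
  have hn0 : 0 < n := hn
  have hM0 : 0 < M := by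
    rcases Nat.eq_zero_or_pos M with h|h
    · subst h; rw [Nat.mul_zero] at hprod; omega
    · exact h
  subst hprod
  constructor
  · intro j j' a b hjj'
    simp only [Gf, Matrix.of_apply, site]
    have hd : ¬ ((n:ℤ) ∣ ((((j:ℕ) + (a:ℕ)*n : ℕ):ℤ) - (((j':ℕ) + (b:ℕ)*n : ℕ):ℤ))) := by
      rintro ⟨m, hm⟩
      have h1 : ((j:ℕ):ℤ) - ((j':ℕ):ℤ) = (n:ℤ) * (m - (a:ℕ) + (b:ℕ)) := by
        push_cast at hm ⊢
        linear_combination hm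
      have h3 : ((j:ℕ):ℤ) - ((j':ℕ):ℤ) ≠ 0 :=
        sub_ne_zero.mpr (by exact_mod_cast Fin.val_ne_of_ne hjj')
      have h4 : (n:ℤ) ≤ |((j:ℕ):ℤ) - ((j':ℕ):ℤ)| :=
        Int.le_of_dvd (abs_pos.mpr h3) ((dvd_abs _ _).mpr ⟨_, h1⟩)
      have hj := j.isLt
      have hj' := j'.isLt
      rcases abs_cases (((j:ℕ):ℤ) - ((j':ℕ):ℤ)) with ⟨he,_⟩|⟨he,_⟩ <;> omega
    rw [SUM0 n M hn0 hM0 _ hd, mul_zero]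
  · intro j a b
    simp only [Gf, Matrix.of_apply, site]
    have hD : ((((j:ℕ) + (a:ℕ)*n : ℕ):ℤ) - (((j:ℕ) + (b:ℕ)*n : ℕ):ℤ))
        = (((a:ℕ):ℤ) - ((b:ℕ):ℤ)) * (n:ℤ) := by push_cast; ring
    rw [hD, SUM1 n M hn0 hM0 (((a:ℕ):ℤ) - ((b:ℕ):ℤ))]
    set S := ∑ c : Fin M,
        (Complex.exp (Complex.I * (theta M c : ℂ)) + 1) /
            ((‖Complex.exp (Complex.I * (theta M c : ℂ)) + 1‖) : ℂ) *
          Complex.exp (Complex.I * (theta M c : ℂ) * (((((a:ℕ):ℤ) - ((b:ℕ):ℤ)) : ℤ) : ℂ)) with hS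
    have hn' : (n:ℂ) ≠ 0 := Nat.cast_ne_zero.mpr hn0.ne'
    have hM' : (M:ℂ) ≠ 0 := Nat.cast_ne_zero.mpr hM0.ne'
    rcases Nat.even_or_odd n with hev|hodd
    · rw [if_neg (Nat.not_odd_iff_even.mpr hev), sign_even n hev (((a:ℕ):ℤ) - ((b:ℕ):ℤ)),
        Nat.cast_mul]
      have hsc := sign_cancel (a:ℕ) (b:ℕ)
      field_simp
      linear_combination (-S) * hsc
    · rw [if_pos hodd, sign_odd n hodd (((a:ℕ):ℤ) - ((b:ℕ):ℤ)), Nat.cast_mul]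
      field_simp
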